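/- arXiv:1811.03035 — 2 statements merged into one kernel-verified Lean document; each statement's English description precedes it below -/
import Mathlib

section
/- (Conditional dominance of the n-step backup.) In the n-step MDP setting with a sub-σ-algebra 𝒢 ⊆ 𝓕, for every n ∈ ℕ, every state s and action a, the conditional static value is dominated by the conditional expectation of the random n-step value: φ_n^𝒢(s,a) ≤ E[Υ_n(s,a) | 𝒢] almost surely. -/
open MeasureTheory

/-- Pointwise `n`-step backup of the random frontier values `Z`:
`Υ_0(s,a) = Z(s,a)` and
`Υ_{n+1}(s,a) = Σ_{s'} P(s,a,s')·(R(s,a,s') + γ·max_{a' ∈ A_{s'}} Υ_n(s',a'))`. -/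
noncomputable def Upsilon {Ω S A : Type*} [Fintype S] (As : S → Finset A)
    (hAs : ∀ s, (As s).Nonempty) (P R : S → A → S → ℝ) (γ : ℝ)
    (Z : S → A → Ω → ℝ) : ℕ → S → A → Ω → ℝ
  | 0 => fun s a ω => Z s a ω
  | n + 1 => fun s a ω => ∑ s' : S, P s a s' *
      (R s a s' + γ * (As s').sup' (hAs s') fun a' => Upsilon As hAs P R γ Z n s' a' ω)

/-- Deterministic `n`-step backup of a base value function: used for the static value `φ_n`
(base `(s,a) ↦ E[Z(s,a)]`) and, pointwise in `ω`, for the conditional static value `φ_n^𝒢`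
(base `(s,a) ↦ E[Z(s,a)|𝒢](ω)`). -/
noncomputable def stepValue {S A : Type*} [Fintype S] (As : S → Finset A)
    (hAs : ∀ s, (As s).Nonempty) (P R : S → A → S → ℝ) (γ : ℝ)
    (base : S → A → ℝ) : ℕ → S → A → ℝ
  | 0 => base
  | n + 1 => fun s a => ∑ s' : S, P s a s' *
      (R s a s' + γ * (As s').sup' (hAs s') fun a' => stepValue As hAs P R γ base n s' a')


lemma integrable_sup'_aux {Ω A : Type*} {mΩ : MeasurableSpace Ω} {μ : Measure Ω}
    (t : Finset A) (ht : t.Nonempty) (f : A → Ω → ℝ)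
    (hf : ∀ a ∈ t, Integrable (f a) μ) :
    Integrable (fun ω => t.sup' ht fun a => f a ω) μ := by
  induction ht using Finset.Nonempty.cons_induction with
  | singleton a => simpa using hf a (by simp)
  | cons a t hat htne ih =>
    rw [show (fun ω => (Finset.cons a t hat).sup' (Finset.cons_nonempty hat) fun b => f b ω)
        = fun ω => f a ω ⊔ t.sup' htne fun b => f b ω from
        funext fun ω => Finset.sup'_cons htne _]
    exact (hf a (by simp)).sup (ih fun b hb => hf b (Finset.mem_cons_of_mem hb))

lemma upsilon_integrable {Ω S A : Type*} {mΩ : MeasurableSpace Ω} {μ : Measure Ω}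
    [Fintype S] (As : S → Finset A) (hAs : ∀ s, (As s).Nonempty)
    (P R : S → A → S → ℝ) (γ : ℝ) (Z : S → A → Ω → ℝ)
    [IsFiniteMeasure μ] (hZ : ∀ s a, Integrable (Z s a) μ) :
    ∀ n s a, Integrable (Upsilon As hAs P R γ Z n s a) μ := by
  intro n
  induction n with
  | zero => intro s a; simpa [Upsilon] using hZ s a
  | succ n ih =>
    intro s a
    simp only [Upsilon]
    refine integrable_finset_sum _ fun s' _ => ?_
    exact ((integrable_const (R s a s')).add
      ((integrable_sup'_aux _ _ _ fun a' _ => ih s' a').const_mul γ)).const_mul (P s a s')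


/-- Conditional dominance of the `n`-step backup: for a sub-σ-algebra `𝒢 ⊆ 𝓕`,
for every `n`, `s`, `a`, the conditional static value satisfies
`φ_n^𝒢(s,a) ≤ E[Υ_n(s,a) | 𝒢]` almost surely. -/
theorem voc_stmt13 {Ω S A : Type*} {mΩ : MeasurableSpace Ω} (μ : Measure Ω)
    [IsProbabilityMeasure μ] [Fintype S] [Nonempty S] [Fintype A] [Nonempty A]
    (As : S → Finset A) (hAs : ∀ s, (As s).Nonempty) (P R : S → A → S → ℝ)
    (hP : ∀ s a s', 0 ≤ P s a s') (hPsum : ∀ s a, ∑ s', P s a s' = 1)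
    (γ : ℝ) (hγ : 0 ≤ γ) (Z : S → A → Ω → ℝ) (hZ : ∀ s a, Integrable (Z s a) μ)
    (m : MeasurableSpace Ω) (hm : m ≤ mΩ) :
    ∀ (n : ℕ) (s : S) (a : A),
      ∀ᵐ ω ∂μ,
        stepValue As hAs P R γ (fun s' a' => (μ[Z s' a'|m]) ω) n s a ≤
          (μ[Upsilon As hAs P R γ Z n s a|m]) ω := by

  intro n
  induction n with
  | zero =>
    intro s a
    simp only [stepValue, Upsilon]
    exact Filter.Eventually.of_forall fun ω => le_rfl
  | succ n ih =>
    intro s a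
    have hint := upsilon_integrable As hAs P R γ Z hZ
    set U := Upsilon As hAs P R γ Z with hU
    have hsupint : ∀ s' : S,
        Integrable (fun ω => (As s').sup' (hAs s') fun a' => U n s' a' ω) μ :=
      fun s' => integrable_sup'_aux _ _ _ fun a' _ => hint n s' a'
    -- comparison: stepValue n ≤ condexp of sup, a.e., for all s', a' ∈ As s'
    have hcomp : ∀ᵐ ω ∂μ, ∀ s' : S, ∀ a' : A, a' ∈ As s' →
        stepValue As hAs P R γ (fun s'' a'' => (μ[Z s'' a''|m]) ω) n s' a' ≤
          (μ[fun ω => (As s').sup' (hAs s') fun b => U n s' b ω|m]) ω := by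
      rw [ae_all_iff]
      intro s'
      rw [ae_all_iff]
      intro a'
      by_cases ha' : a' ∈ As s'
      · have h1 := ih s' a'
        have h2 : μ[U n s' a'|m] ≤ᵐ[μ]
            μ[fun ω => (As s').sup' (hAs s') fun b => U n s' b ω|m] :=
          condExp_mono (hint n s' a') (hsupint s')
            (Filter.Eventually.of_forall fun ω => Finset.le_sup' (fun b => U n s' b ω) ha')
        filter_upwards [h1, h2] with ω h1 h2 _
        exact h1.trans h2
      · exact Filter.Eventually.of_forall fun ω h => absurd h ha'
    -- condexp of Upsilon (n+1) equals the deterministic combination of condexps of sups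
    have heq : μ[U (n + 1) s a|m] =ᵐ[μ] fun ω => ∑ s' : S, P s a s' *
        (R s a s' + γ * (μ[fun ω => (As s').sup' (hAs s') fun b => U n s' b ω|m]) ω) := by
      have hrw : U (n + 1) s a = fun ω => ∑ s' : S, P s a s' *
          (R s a s' + γ * (As s').sup' (hAs s') fun b => U n s' b ω) := rfl
      rw [hrw]
      have hterm : ∀ s' : S, Integrable (fun ω => P s a s' *
          (R s a s' + γ * (As s').sup' (hAs s') fun b => U n s' b ω)) μ :=
        fun s' => ((integrable_const (R s a s')).add ((hsupint s').const_mul γ)).const_mul (P s a s')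
      rw [show (fun ω => ∑ s' : S, P s a s' *
          (R s a s' + γ * (As s').sup' (hAs s') fun b => U n s' b ω))
          = ∑ s' : S, fun ω => P s a s' *
          (R s a s' + γ * (As s').sup' (hAs s') fun b => U n s' b ω) from
          funext fun ω => by rw [Finset.sum_apply]]
      refine (condExp_finsetSum (fun s' _ => hterm s') m (μ := μ)).trans ?_
      have hsum : ∀ s' : S, μ[fun ω => P s a s' *
            (R s a s' + γ * (As s').sup' (hAs s') fun b => U n s' b ω)|m] =ᵐ[μ]
          fun ω => P s a s' * (R s a s' +
            γ * (μ[fun ω => (As s').sup' (hAs s') fun b => U n s' b ω|m]) ω) := by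
        intro s'
        have e1 : μ[fun ω => P s a s' *
              (R s a s' + γ * (As s').sup' (hAs s') fun b => U n s' b ω)|m] =ᵐ[μ]
            fun ω => P s a s' * (μ[fun ω =>
              R s a s' + γ * (As s').sup' (hAs s') fun b => U n s' b ω|m]) ω :=
          condExp_smul (P s a s') _ m
        have e2 : μ[fun ω => R s a s' + γ *
              (As s').sup' (hAs s') fun b => U n s' b ω|m] =ᵐ[μ]
            fun ω => R s a s' +
              (μ[fun ω => γ * (As s').sup' (hAs s') fun b => U n s' b ω|m]) ω := by
          refine (condExp_add (integrable_const _) ((hsupint s').const_mul γ) m).trans ?_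
          rw [condExp_const hm (R s a s') (μ := μ)]
          exact Filter.Eventually.of_forall fun ω => rfl
        have e3 : μ[fun ω => γ * (As s').sup' (hAs s') fun b => U n s' b ω|m] =ᵐ[μ]
            fun ω => γ * (μ[fun ω => (As s').sup' (hAs s') fun b => U n s' b ω|m]) ω :=
          condExp_smul γ _ m
        filter_upwards [e1, e2, e3] with ω e1 e2 e3
        rw [e1, e2, e3]
      have hall := ae_all_iff.2 fun s' : S => hsum s'
      filter_upwards [hall] with ω hω
      rw [Finset.sum_apply]
      exact Finset.sum_congr rfl fun s' _ => hω s'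
    filter_upwards [hcomp, heq] with ω hcomp heq
    rw [heq]
    show ∑ s' : S, P s a s' * (R s a s' + γ * (As s').sup' (hAs s')
        fun a' => stepValue As hAs P R γ (fun s'' a'' => (μ[Z s'' a''|m]) ω) n s' a') ≤ _
    refine Finset.sum_le_sum fun s' _ => ?_
    refine mul_le_mul_of_nonneg_left (add_le_add_right
      (mul_le_mul_of_nonneg_left ?_ hγ) _) (hP s a s')
    exact Finset.sup'_le _ _ fun a' ha' => hcomp s' a' ha'
end

section
/- (Sandwich between static and dynamic values.) In the n-step MDP setting with a sub-σ-algebra 𝒢 ⊆ 𝓕, for every n ∈ ℕ, every state s and action a: ψ_n(s,a) ≥ E[φ_n^𝒢(s,a)] ≥ φ_n(s,a), where ψ_n(s,a) := E[Υ_n(s,a)]. That is, the expected static value after any computation lies between the static and the dynamic value. -/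
open MeasureTheory

lemma stepValue_eq_upsilon {Ω S A : Type*} [Fintype S] (As : S → Finset A)
    (hAs : ∀ s, (As s).Nonempty) (P R : S → A → S → ℝ) (γ : ℝ)
    (b : S → A → Ω → ℝ) : ∀ (n : ℕ) (s : S) (a : A) (ω : Ω),
    stepValue As hAs P R γ (fun s' a' => b s' a' ω) n s a = Upsilon As hAs P R γ b n s a ω := by
  intro n
  induction n with
  | zero => intro s a ω; rfl
  | succ n ih => intro s a ω; simp only [stepValue, Upsilon, ih]

lemma integrable_sup' {Ω ι : Type*} {mΩ : MeasurableSpace Ω} {μ : Measure Ω}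
    {s : Finset ι} (hs : s.Nonempty) (f : ι → Ω → ℝ)
    (hf : ∀ i ∈ s, Integrable (f i) μ) :
    Integrable (fun ω => s.sup' hs fun i => f i ω) μ := by
  induction hs using Finset.Nonempty.cons_induction with
  | singleton i =>
    simp only [Finset.sup'_singleton]
    exact hf i (Finset.mem_singleton_self i)
  | cons i t hi ht ih =>
    simp only [Finset.sup'_cons ht]
    exact (hf i (by simp)).sup (ih fun j hj => hf j (by simp [hj]))

lemma integrable_upsilon {Ω S A : Type*} {mΩ : MeasurableSpace Ω} {μ : Measure Ω}
    [IsFiniteMeasure μ] [Fintype S] (As : S → Finset A)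
    (hAs : ∀ s, (As s).Nonempty) (P R : S → A → S → ℝ) (γ : ℝ)
    (b : S → A → Ω → ℝ) (hb : ∀ s a, Integrable (b s a) μ) :
    ∀ (n : ℕ) (s : S) (a : A), Integrable (Upsilon As hAs P R γ b n s a) μ := by
  intro n
  induction n with
  | zero => exact hb
  | succ n ih =>
    intro s a
    simp only [Upsilon]
    refine integrable_finset_sum _ fun s' _ => Integrable.const_mul ?_ _
    exact (integrable_const _).add (((integrable_sup' (hAs s') _ (fun a' _ => ih s' a')).const_mul γ))

/-- Conditional expectation commutes with one backup step. -/
lemma condexp_step {Ω S : Type*} {mΩ : MeasurableSpace Ω} {μ : Measure Ω}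
    [IsProbabilityMeasure μ] [Fintype S] {m : MeasurableSpace Ω} (hm : m ≤ mΩ)
    (c r : S → ℝ) (γ : ℝ) (f : S → Ω → ℝ) (hf : ∀ s', Integrable (f s') μ) :
    μ[fun ω => ∑ s' : S, c s' * (r s' + γ * f s' ω)|m]
      =ᵐ[μ] fun ω => ∑ s' : S, c s' * (r s' + γ * (μ[f s'|m]) ω) := by
  have hrw : (fun ω => ∑ s' : S, c s' * (r s' + γ * f s' ω))
      = fun ω => (∑ s' : S, c s' * r s') + ∑ s' : S, (c s' * γ) * f s' ω := by
    funext ω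
    rw [← Finset.sum_add_distrib]
    exact Finset.sum_congr rfl fun s' _ => by ring
  rw [hrw]
  have hint : Integrable (fun ω => ∑ s' : S, (c s' * γ) * f s' ω) μ :=
    integrable_finset_sum _ fun s' _ => (hf s').const_mul _
  refine ((condExp_add (integrable_const _) hint m).trans ?_)
  have h1 : μ[fun _ => (∑ s' : S, c s' * r s')|m] =ᵐ[μ] fun _ => ∑ s' : S, c s' * r s' :=
    Filter.EventuallyEq.of_eq (condExp_const hm _)
  have h2 : μ[fun ω => ∑ s' : S, (c s' * γ) * f s' ω|m]
      =ᵐ[μ] fun ω => ∑ s' : S, (c s' * γ) * (μ[f s'|m]) ω := by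
    have hsum : (fun ω => ∑ s' : S, (c s' * γ) * f s' ω)
        = ∑ s' : S, fun ω => (c s' * γ) * f s' ω := by
      funext ω; simp [Finset.sum_apply]
    rw [hsum]
    refine (condExp_finset_sum (fun s' _ => (hf s').const_mul _) m).trans ?_
    have h3 : ∀ s' : S, μ[fun ω => (c s' * γ) * f s' ω|m]
        =ᵐ[μ] fun ω => (c s' * γ) * (μ[f s'|m]) ω := by
      intro s'
      have := condExp_smul (μ := μ) (m := m) (c s' * γ) (f s')
      exact this
    have h4 : ∀ᵐ ω ∂μ, ∀ s' : S, (μ[fun ω => (c s' * γ) * f s' ω|m]) ω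
        = (c s' * γ) * (μ[f s'|m]) ω := ae_all_iff.2 h3
    filter_upwards [h4] with ω hω
    simp only [Finset.sum_apply]
    exact Finset.sum_congr rfl fun s' _ => hω s'
  filter_upwards [h1, h2] with ω h1ω h2ω
  simp only [Pi.add_apply, h1ω, h2ω]
  rw [← Finset.sum_add_distrib]
  exact Finset.sum_congr rfl fun s' _ => by ring

/-- Key lemma A: `Υ_n` built from `E[Z|m]` is a.e. below `E[Υ_n(Z)|m]`. -/
lemma upsilon_condexp_le {Ω S A : Type*} {mΩ : MeasurableSpace Ω} {μ : Measure Ω}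
    [IsProbabilityMeasure μ] [Fintype S] [Fintype A] (As : S → Finset A)
    (hAs : ∀ s, (As s).Nonempty) (P R : S → A → S → ℝ)
    (hP : ∀ s a s', 0 ≤ P s a s') (γ : ℝ) (hγ : 0 ≤ γ)
    (Z : S → A → Ω → ℝ) (hZ : ∀ s a, Integrable (Z s a) μ)
    {m : MeasurableSpace Ω} (hm : m ≤ mΩ) :
    ∀ (n : ℕ) (s : S) (a : A),
      Upsilon As hAs P R γ (fun s' a' => μ[Z s' a'|m]) n s a
        ≤ᵐ[μ] μ[Upsilon As hAs P R γ Z n s a|m] := by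
  intro n
  induction n with
  | zero => intro s a; exact Filter.EventuallyLE.refl _ _
  | succ n ih =>
    intro s a
    set F : S → Ω → ℝ := fun s' ω => (As s').sup' (hAs s') fun a' => Upsilon As hAs P R γ Z n s' a' ω with hF
    have hint : ∀ s', Integrable (F s') μ :=
      fun s' => integrable_sup' (hAs s') _ fun a' _ =>
        integrable_upsilon As hAs P R γ Z hZ n s' a'
    have hce : μ[Upsilon As hAs P R γ Z (n + 1) s a|m]
        =ᵐ[μ] fun ω => ∑ s' : S, P s a s' * (R s a s' + γ * (μ[F s'|m]) ω) :=
      condexp_step hm (P s a) (R s a) γ F hint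
    have h1 : ∀ᵐ ω ∂μ, ∀ s' a', Upsilon As hAs P R γ (fun s' a' => μ[Z s' a'|m]) n s' a' ω
        ≤ (μ[Upsilon As hAs P R γ Z n s' a'|m]) ω :=
      ae_all_iff.2 fun s' => ae_all_iff.2 fun a' => ih s' a'
    have h2 : ∀ᵐ ω ∂μ, ∀ s' a', a' ∈ As s' →
        (μ[Upsilon As hAs P R γ Z n s' a'|m]) ω ≤ (μ[F s'|m]) ω := by
      rw [ae_all_iff]
      intro s'
      rw [ae_all_iff]
      intro a'
      by_cases ha : a' ∈ As s'
      · have := condExp_mono (μ := μ) (m := m)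
          (integrable_upsilon As hAs P R γ Z hZ n s' a') (hint s')
          (Filter.Eventually.of_forall fun ω =>
            Finset.le_sup' (fun a'' => Upsilon As hAs P R γ Z n s' a'' ω) ha)
        filter_upwards [this] with ω hω _
        exact hω
      · filter_upwards with ω h
        exact absurd h ha
    filter_upwards [hce, h1, h2] with ω hceω h1ω h2ω
    rw [hceω]
    show ∑ s' : S, P s a s' * (R s a s' + γ * (As s').sup' (hAs s')
        fun a' => Upsilon As hAs P R γ (fun s' a' => μ[Z s' a'|m]) n s' a' ω) ≤ _
    refine Finset.sum_le_sum fun s' _ => ?_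
    refine mul_le_mul_of_nonneg_left (add_le_add_right ?_ _) (hP s a s')
    refine mul_le_mul_of_nonneg_left ?_ hγ
    exact Finset.sup'_le _ _ fun a' ha' => (h1ω s' a').trans (h2ω s' a' ha')

lemma stepValue_le_integral {Ω S A : Type*} {mΩ : MeasurableSpace Ω} {μ : Measure Ω}
    [IsProbabilityMeasure μ] [Fintype S] [Fintype A] (As : S → Finset A)
    (hAs : ∀ s, (As s).Nonempty) (P R : S → A → S → ℝ)
    (hP : ∀ s a s', 0 ≤ P s a s') (γ : ℝ) (hγ : 0 ≤ γ)
    (b : S → A → Ω → ℝ) (hb : ∀ s a, Integrable (b s a) μ) :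
    ∀ (n : ℕ) (s : S) (a : A),
      stepValue As hAs P R γ (fun s' a' => ∫ ω, b s' a' ω ∂μ) n s a ≤
        ∫ ω, Upsilon As hAs P R γ b n s a ω ∂μ := by
  intro n
  induction n with
  | zero => intro s a; exact le_of_eq rfl
  | succ n ih =>
    intro s a
    have hint : ∀ s' : S, Integrable
        (fun ω => (As s').sup' (hAs s') fun a' => Upsilon As hAs P R γ b n s' a' ω) μ :=
      fun s' => integrable_sup' (hAs s') _ fun a' _ =>
        integrable_upsilon As hAs P R γ b hb n s' a'
    show _ ≤ ∫ ω, ∑ s' : S, P s a s' * (R s a s' + γ *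
        (As s').sup' (hAs s') fun a' => Upsilon As hAs P R γ b n s' a' ω) ∂μ
    rw [integral_finset_sum Finset.univ
      (f := fun (s' : S) (ω : Ω) => P s a s' * (R s a s' + γ *
        (As s').sup' (hAs s') fun a' => Upsilon As hAs P R γ b n s' a' ω))
      (fun s' _ => (((integrable_const _).add ((hint s').const_mul γ)).const_mul _))]
    show ∑ s' : S, P s a s' * (R s a s' + γ * (As s').sup' (hAs s')
        fun a' => stepValue As hAs P R γ (fun s' a' => ∫ ω, b s' a' ω ∂μ) n s' a') ≤ _
    refine Finset.sum_le_sum fun s' _ => ?_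
    rw [integral_const_mul, integral_add (integrable_const _) ((hint s').const_mul γ),
      integral_const, integral_const_mul]
    simp only [measure_univ, probReal_univ, ENNReal.toReal_one, smul_eq_mul, one_mul]
    refine mul_le_mul_of_nonneg_left (add_le_add_right ?_ _) (hP s a s')
    refine mul_le_mul_of_nonneg_left ?_ hγ
    refine Finset.sup'_le _ _ fun a' ha' => (ih s' a').trans ?_
    refine integral_mono (integrable_upsilon As hAs P R γ b hb n s' a') (hint s') fun ω => ?_
    exact Finset.le_sup' (fun a'' => Upsilon As hAs P R γ b n s' a'' ω) ha'

/-- Sandwich between static and dynamic values: for a sub-σ-algebra `𝒢 ⊆ 𝓕`,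
for every `n`, `s`, `a`, `ψ_n(s,a) ≥ E[φ_n^𝒢(s,a)] ≥ φ_n(s,a)`, where `ψ_n(s,a) = E[Υ_n(s,a)]`. -/
theorem voc_stmt15 {Ω S A : Type*} {mΩ : MeasurableSpace Ω} (μ : Measure Ω)
    [IsProbabilityMeasure μ] [Fintype S] [Nonempty S] [Fintype A] [Nonempty A]
    (As : S → Finset A) (hAs : ∀ s, (As s).Nonempty) (P R : S → A → S → ℝ)
    (hP : ∀ s a s', 0 ≤ P s a s') (hPsum : ∀ s a, ∑ s', P s a s' = 1)
    (γ : ℝ) (hγ : 0 ≤ γ) (Z : S → A → Ω → ℝ) (hZ : ∀ s a, Integrable (Z s a) μ)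
    (m : MeasurableSpace Ω) (hm : m ≤ mΩ) :
    ∀ (n : ℕ) (s : S) (a : A),
      (∫ ω, stepValue As hAs P R γ (fun s' a' => (μ[Z s' a'|m]) ω) n s a ∂μ) ≤
          ∫ ω, Upsilon As hAs P R γ Z n s a ω ∂μ ∧
        stepValue As hAs P R γ (fun s' a' => ∫ ω, Z s' a' ω ∂μ) n s a ≤
          ∫ ω, stepValue As hAs P R γ (fun s' a' => (μ[Z s' a'|m]) ω) n s a ∂μ := by
  intro n s a
  have hb : ∀ (s : S) (a : A), Integrable (μ[Z s a|m]) μ := fun s a => integrable_condExp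
  have hrw : (fun ω => stepValue As hAs P R γ (fun s' a' => (μ[Z s' a'|m]) ω) n s a)
      = Upsilon As hAs P R γ (fun s' a' => μ[Z s' a'|m]) n s a :=
    funext fun ω => stepValue_eq_upsilon As hAs P R γ _ n s a ω
  constructor
  · rw [hrw]
    refine le_trans (integral_mono_ae
      (integrable_upsilon As hAs P R γ _ hb n s a) integrable_condExp
      (upsilon_condexp_le As hAs P R hP γ hγ Z hZ hm n s a)) ?_
    rw [integral_condExp hm]
  · have hbase : (fun s' a' => ∫ ω, Z s' a' ω ∂μ)
        = fun (s' : S) (a' : A) => ∫ ω, (μ[Z s' a'|m]) ω ∂μ :=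
      funext fun s' => funext fun a' => (integral_condExp hm).symm
    rw [hbase, hrw]
    exact stepValue_le_integral As hAs P R hP γ hγ _ hb n s a
end
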